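/- Let $F$ be a reduced $(s,t)$-Steiner bundle on $\mathbb{P}^n$ and $(\alpha, H)$ a jumping pair of $F$. Let $S' \subset S$ and $T' \subset T$ be the hyperplanes corresponding to $\alpha \in \mathbb{P}(S)$ and $(\alpha, H) \in \mathbb{P}(T)$, and let $F'$ be the kernel of the natural composition $F \to F|_H \to \mathcal{O}_H$ defined by $(\alpha, H)$. Then $F'$ is an $(s-1, t-1)$-Steiner bundle with resolution $0 \to S' \otimes \mathcal{O}_{\mathbb{P}^n}(-1) \to T' \otimes \mathcal{O}_{\mathbb{P}^n} \to F' \to 0$, and its defining map $\varphi'$ fits in a commutative square with $\varphi$ via the dual inclusions $j^* : T^* \to (T')^*$ and $i^* \otimes \mathrm{id} : S^* \otimes H^0(\mathcal{O}(1)) \to (S')^* \otimes H^0(\mathcal{O}(1))$. -/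

import Mathlib

open Module

variable {k : Type*} [Field k]

/-- The linear map `φ : T* → Hom(H⁰(O(1))*, S*)`, `φ g = (u ↦ g ∘ μ u)`, associated to
the resolution datum `μ : H⁰(O(1))* → Hom(S,T)` of a Steiner bundle on `ℙⁿ`. -/
noncomputable def steinerDual {S T : Type*} [AddCommGroup S] [Module k S]
    [AddCommGroup T] [Module k T] {n : ℕ}
    (μ : (Fin (n + 1) → k) →ₗ[k] (S →ₗ[k] T)) :
    (T →ₗ[k] k) →ₗ[k] ((Fin (n + 1) → k) →ₗ[k] (S →ₗ[k] k)) where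
  toFun g :=
    { toFun := fun u => g.comp (μ u)
      map_add' := fun u₁ u₂ => by ext x; simp
      map_smul' := fun c u => by ext x; simp }
  map_add' g₁ g₂ := by ext u x; simp
  map_smul' c g := by ext u x; simp

lemma frank_ker_hyperplane {V : Type*} [AddCommGroup V] [Module k V]
    [FiniteDimensional k V] (f : V →ₗ[k] k) (hf : f ≠ 0) :
    finrank k ↥(LinearMap.ker f) = finrank k V - 1 := by
  have hr : finrank k ↥(LinearMap.range f) = 1 := by
    rw [(LinearMap.range_eq_top.mpr ?_)]
    · simp [finrank_self]
    · intro c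
      obtain ⟨x, hx⟩ : ∃ x, f x ≠ 0 := by
        by_contra hc; push_neg at hc; exact hf (LinearMap.ext hc)
      exact ⟨(c / f x) • x, by rw [map_smul, smul_eq_mul]; field_simp⟩
  have := f.finrank_range_add_finrank_ker
  omega

/-- **Proposition (transform).**  Let `F` be a reduced `(s,t)`-Steiner bundle on `ℙⁿ`
with resolution datum `μ` and dual map `φ = steinerDual μ`, and let `(α, H)` be a
jumping pair of `F`: `α = [v]` with `v ∈ S*` nonzero, `H = {h = 0}` with
`h ∈ H⁰(O(1))` nonzero, and `φ g₀ = h ⊗ v` for (a necessarily unique, nonzero)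
`g₀ ∈ T*`.  Let `S' = ker v ⊂ S` and `T' = ker g₀ ⊂ T` be the corresponding
hyperplanes.  Then `μ` restricts to a datum `μ' : H⁰(O(1))* → Hom(S', T')`, which is
again a fiberwise-injective (Steiner) datum; the resulting bundle `F'`, the kernel of
the composition `F → F|_H → O_H` defined by `(α, H)`, is an `(s-1, t-1)`-Steiner
bundle with resolution `0 → S' ⊗ O(-1) → T' ⊗ O → F' → 0`, and its dual map
`φ' = steinerDual μ'` fits in the commutative square
`φ' ∘ j* = (i* ⊗ id) ∘ φ` with the dual hyperplane inclusions `j* : T* → T'*`,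
`i* : S* → S'*`. -/
theorem steiner_transform {S T : Type*} [IsAlgClosed k]
    [AddCommGroup S] [Module k S] [FiniteDimensional k S]
    [AddCommGroup T] [Module k T] [FiniteDimensional k T]
    {n s t : ℕ} (hs : 2 ≤ s) (hS : finrank k S = s) (hT : finrank k T = t)
    (μ : (Fin (n + 1) → k) →ₗ[k] (S →ₗ[k] T))
    (hsteiner : ∀ u : Fin (n + 1) → k, u ≠ 0 → Function.Injective (μ u))
    (hreduced : Function.Injective (steinerDual μ))
    (v : S →ₗ[k] k) (hv : v ≠ 0)
    (h : (Fin (n + 1) → k) →ₗ[k] k) (hh : h ≠ 0)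
    (g₀ : T →ₗ[k] k) (hg₀ : steinerDual μ g₀ = h.smulRight v) :
    (∀ (u : Fin (n + 1) → k), ∀ x ∈ LinearMap.ker v, μ u x ∈ LinearMap.ker g₀)
    ∧ finrank k ↥(LinearMap.ker v) = s - 1
    ∧ finrank k ↥(LinearMap.ker g₀) = t - 1
    ∧ ∃ μ' : (Fin (n + 1) → k) →ₗ[k]
        (↥(LinearMap.ker v) →ₗ[k] ↥(LinearMap.ker g₀)),
        (∀ (u : Fin (n + 1) → k) (x : ↥(LinearMap.ker v)),
          ((μ' u x : T) = μ u (x : S)))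
        ∧ (∀ u : Fin (n + 1) → k, u ≠ 0 → Function.Injective (μ' u))
        ∧ (∀ (g : T →ₗ[k] k) (u : Fin (n + 1) → k),
            steinerDual μ' (g.comp (LinearMap.ker g₀).subtype) u
              = (steinerDual μ g u).comp (LinearMap.ker v).subtype) := by

  have key : ∀ (u : Fin (n + 1) → k) (x : S), g₀ (μ u x) = h u * v x := by
    intro u x
    have := congrFun (congrArg (fun f => (f u : S → k)) hg₀) x
    simpa [steinerDual, LinearMap.smulRight_apply, smul_eq_mul] using this
  have mem : ∀ (u : Fin (n + 1) → k), ∀ x ∈ LinearMap.ker v, μ u x ∈ LinearMap.ker g₀ := by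
    intro u x hx
    simp [LinearMap.mem_ker, key, LinearMap.mem_ker.mp hx]
  have hg₀ne : g₀ ≠ 0 := by
    intro hz
    obtain ⟨u, hu⟩ : ∃ u, h u ≠ 0 := by
      by_contra hc; push_neg at hc; exact hh (LinearMap.ext hc)
    obtain ⟨x, hx⟩ : ∃ x, v x ≠ 0 := by
      by_contra hc; push_neg at hc; exact hv (LinearMap.ext hc)
    have := key u x
    rw [hz] at this
    simp at this
    exact hx (this.resolve_left hu)
  refine ⟨mem, by rw [frank_ker_hyperplane v hv, hS],
    by rw [frank_ker_hyperplane g₀ hg₀ne, hT], ?_⟩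
  refine ⟨{ toFun := fun u =>
              ((μ u).domRestrict (LinearMap.ker v)).codRestrict
                (LinearMap.ker g₀) (fun x => mem u x x.2)
            map_add' := fun u₁ u₂ => LinearMap.ext fun x => Subtype.ext (by
              show μ (u₁ + u₂) (x : S) = μ u₁ (x : S) + μ u₂ (x : S)
              rw [map_add]; rfl)
            map_smul' := fun c u => LinearMap.ext fun x => Subtype.ext (by
              show μ (c • u) (x : S) = c • μ u (x : S)
              rw [map_smul]; rfl) }, fun u x => rfl, ?_, ?_⟩
  · intro u hu x y hxy
    have : μ u (x : S) = μ u (y : S) := congrArg Subtype.val hxy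
    exact Subtype.ext (hsteiner u hu this)
  · intro g u
    ext x
    rfl
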